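/- A 2×2 matrix A with quaternion entries is invertible in the matrix ring M₂(ℍ) (i.e. IsUnit A) if and only if q(A) ≠ 0. This identifies GL(2,ℍ) as the complement of the hypersurface q = 0. -/

import Mathlib

/-- The quartic `q([[a,b],[c,d]]) = |a|²|d|² + |b|²|c|² − 2 Re(a c̄ d b̄)` of a `2 × 2`
quaternionic matrix. -/
noncomputable def quartic (A : Matrix (Fin 2) (Fin 2) (Quaternion ℝ)) : ℝ :=
  Quaternion.normSq (A 0 0) * Quaternion.normSq (A 1 1) +
    Quaternion.normSq (A 0 1) * Quaternion.normSq (A 1 0) -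
    2 * (A 0 0 * star (A 1 0) * A 1 1 * star (A 0 1)).re

namespace QuarticAux

open Quaternion Matrix

lemma quartic_left (a b c d : Quaternion ℝ) :
    normSq a * normSq d + normSq b * normSq c - 2 * (a * star c * d * star b).re =
      (normSq a + normSq c) * (normSq b + normSq d)
        - normSq (star a * b + star c * d) := by
  simp only [Quaternion.normSq_def', Quaternion.re_mul, Quaternion.imI_mul,
    Quaternion.imJ_mul, Quaternion.imK_mul, Quaternion.re_add, Quaternion.imI_add,
    Quaternion.imJ_add, Quaternion.imK_add, Quaternion.re_star, Quaternion.imI_star,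
    Quaternion.imJ_star, Quaternion.imK_star]
  ring

lemma quartic_right (a b c d : Quaternion ℝ) :
    normSq a * normSq d + normSq b * normSq c - 2 * (a * star c * d * star b).re =
      (normSq a + normSq b) * (normSq c + normSq d)
        - normSq (a * star c + b * star d) := by
  simp only [Quaternion.normSq_def', Quaternion.re_mul, Quaternion.imI_mul,
    Quaternion.imJ_mul, Quaternion.imK_mul, Quaternion.re_add, Quaternion.imI_add,
    Quaternion.imJ_add, Quaternion.imK_add, Quaternion.re_star, Quaternion.imI_star,
    Quaternion.imJ_star, Quaternion.imK_star]
  ring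

lemma quartic_apply (a b c d : Quaternion ℝ) :
    quartic !![a, b; c, d] =
      normSq a * normSq d + normSq b * normSq c - 2 * (a * star c * d * star b).re := by
  simp [quartic]

lemma conjT_fin_two (a b c d : Quaternion ℝ) :
    (!![a, b; c, d])ᴴ = !![star a, star c; star b, star d] := by
  apply Matrix.ext; intro i j
  fin_cases i <;> fin_cases j <;> simp [conjTranspose_apply]

/-- `N * M = Δ • 1` for the hermitian `M` with real diagonal. -/
lemma N_mul_M (p r : ℝ) (s : Quaternion ℝ) :
    (!![(r : Quaternion ℝ), -s; -star s, (p : Quaternion ℝ)] *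
        !![(p : Quaternion ℝ), s; star s, (r : Quaternion ℝ)]) =
      !![((p * r - normSq s : ℝ) : Quaternion ℝ), 0;
         0, ((p * r - normSq s : ℝ) : Quaternion ℝ)] := by
  have h00 : (r : Quaternion ℝ) * (p : Quaternion ℝ) + -s * star s
      = ((p * r - normSq s : ℝ) : Quaternion ℝ) := by
    rw [neg_mul, Quaternion.self_mul_star, ← Quaternion.coe_mul, mul_comm r p,
      sub_eq_add_neg]
    push_cast
    rfl
  have h01 : (r : Quaternion ℝ) * s + -s * (r : Quaternion ℝ) = 0 := by
    rw [Quaternion.coe_commutes, neg_mul]; simp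
  have h10 : -star s * (p : Quaternion ℝ) + (p : Quaternion ℝ) * star s = 0 := by
    rw [Quaternion.coe_commutes, neg_mul]; simp
  have h11 : -star s * s + (p : Quaternion ℝ) * (r : Quaternion ℝ)
      = ((p * r - normSq s : ℝ) : Quaternion ℝ) := by
    rw [neg_mul, Quaternion.star_mul_self, ← Quaternion.coe_mul]
    push_cast
    abel
  rw [Matrix.mul_fin_two, h00, h01, h10, h11]

lemma M_mul_N (p r : ℝ) (s : Quaternion ℝ) :
    (!![(p : Quaternion ℝ), s; star s, (r : Quaternion ℝ)] *
        !![(r : Quaternion ℝ), -s; -star s, (p : Quaternion ℝ)]) =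
      !![((p * r - normSq s : ℝ) : Quaternion ℝ), 0;
         0, ((p * r - normSq s : ℝ) : Quaternion ℝ)] := by
  have h00 : (p : Quaternion ℝ) * (r : Quaternion ℝ) + s * -star s
      = ((p * r - normSq s : ℝ) : Quaternion ℝ) := by
    rw [mul_neg, Quaternion.self_mul_star, ← Quaternion.coe_mul]
    push_cast
    abel
  have h01 : (p : Quaternion ℝ) * -s + s * (p : Quaternion ℝ) = 0 := by
    rw [mul_neg, Quaternion.coe_commutes]; simp
  have h10 : star s * (r : Quaternion ℝ) + (r : Quaternion ℝ) * -star s = 0 := by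
    rw [mul_neg, Quaternion.coe_commutes]; simp
  have h11 : star s * -s + (r : Quaternion ℝ) * (p : Quaternion ℝ)
      = ((p * r - normSq s : ℝ) : Quaternion ℝ) := by
    rw [mul_neg, Quaternion.star_mul_self, ← Quaternion.coe_mul, mul_comm r p]
    push_cast
    abel
  rw [Matrix.mul_fin_two, h00, h01, h10, h11]

lemma conjT_mul_self (a b c d : Quaternion ℝ) :
    (!![a, b; c, d])ᴴ * !![a, b; c, d] =
      !![((normSq a + normSq c : ℝ) : Quaternion ℝ), star a * b + star c * d;
         star (star a * b + star c * d), ((normSq b + normSq d : ℝ) : Quaternion ℝ)] := by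
  have h00 : star a * a + star c * c = ((normSq a + normSq c : ℝ) : Quaternion ℝ) := by
    rw [Quaternion.star_mul_self, Quaternion.star_mul_self]; push_cast; rfl
  have h10 : star b * a + star d * c = star (star a * b + star c * d) := by
    simp [star_add, StarMul.star_mul]
  have h11 : star b * b + star d * d = ((normSq b + normSq d : ℝ) : Quaternion ℝ) := by
    rw [Quaternion.star_mul_self, Quaternion.star_mul_self]; push_cast; rfl
  rw [conjT_fin_two, Matrix.mul_fin_two, h00, h10, h11]

lemma self_mul_conjT (a b c d : Quaternion ℝ) :
    !![a, b; c, d] * (!![a, b; c, d])ᴴ =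
      !![((normSq a + normSq b : ℝ) : Quaternion ℝ), a * star c + b * star d;
         star (a * star c + b * star d), ((normSq c + normSq d : ℝ) : Quaternion ℝ)] := by
  have h00 : a * star a + b * star b = ((normSq a + normSq b : ℝ) : Quaternion ℝ) := by
    rw [Quaternion.self_mul_star, Quaternion.self_mul_star]; push_cast; rfl
  have h10 : c * star a + d * star b = star (a * star c + b * star d) := by
    simp [star_add, StarMul.star_mul]
  have h11 : c * star c + d * star d = ((normSq c + normSq d : ℝ) : Quaternion ℝ) := by
    rw [Quaternion.self_mul_star, Quaternion.self_mul_star]; push_cast; rfl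
  rw [conjT_fin_two, Matrix.mul_fin_two, h00, h10, h11]

lemma main_aux (a b c d : Quaternion ℝ) :
    IsUnit !![a, b; c, d] ↔ quartic !![a, b; c, d] ≠ 0 := by
  set A : Matrix (Fin 2) (Fin 2) (Quaternion ℝ) := !![a, b; c, d] with hA
  set p : ℝ := normSq a + normSq c with hp
  set r : ℝ := normSq b + normSq d with hr
  set s : Quaternion ℝ := star a * b + star c * d with hs
  have hΔl : quartic A = p * r - normSq s := by
    rw [hA, quartic_apply, quartic_left]
  set p' : ℝ := normSq a + normSq b with hp'
  set r' : ℝ := normSq c + normSq d with hr'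
  set t : Quaternion ℝ := a * star c + b * star d with ht
  have hΔr : quartic A = p' * r' - normSq t := by
    rw [hA, quartic_apply, quartic_right]
  have hM : Aᴴ * A = !![(p : Quaternion ℝ), s; star s, (r : Quaternion ℝ)] := by
    rw [hA, conjT_mul_self, ← hp, ← hr, ← hs]
  have hM' : A * Aᴴ = !![(p' : Quaternion ℝ), t; star t, (r' : Quaternion ℝ)] := by
    rw [hA, self_mul_conjT, ← hp', ← hr', ← ht]
  constructor
  · -- unit → quartic ≠ 0
    rintro hu hq
    obtain ⟨B, hAB⟩ := hu.exists_right_inv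
    obtain ⟨C, hBA⟩ := hu.exists_left_inv
    set N : Matrix (Fin 2) (Fin 2) (Quaternion ℝ) :=
      !![(r : Quaternion ℝ), -s; -star s, (p : Quaternion ℝ)] with hN
    have hq0 : p * r - normSq s = 0 := by rw [← hΔl]; exact hq
    have hNM : N * (Aᴴ * A) = 0 := by
      rw [hM, hN, N_mul_M, hq0]
      apply Matrix.ext; intro i j
      fin_cases i <;> fin_cases j <;> simp
    have hNAh : N * Aᴴ = 0 := by
      calc N * Aᴴ = N * Aᴴ * (A * B) := by rw [hAB, mul_one]
        _ = N * (Aᴴ * A) * B := by rw [mul_assoc, mul_assoc, mul_assoc]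
        _ = 0 := by rw [hNM, zero_mul]
    by_cases hr0 : r = 0
    · -- b = d = 0 : second column is zero
      have hsum : normSq b + normSq d = 0 := by rw [← hr]; exact hr0
      have hb : b = 0 := by
        have h1 := Quaternion.normSq_nonneg (a := b)
        have h2 := Quaternion.normSq_nonneg (a := d)
        exact Quaternion.normSq_eq_zero.mp (by linarith)
      have hd : d = 0 := by
        have h1 := Quaternion.normSq_nonneg (a := b)
        have h2 := Quaternion.normSq_nonneg (a := d)
        exact Quaternion.normSq_eq_zero.mp (by linarith)
      set E : Matrix (Fin 2) (Fin 2) (Quaternion ℝ) := !![0, 0; 0, 1] with hE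
      have hAE : A * E = 0 := by
        apply Matrix.ext; intro i j
        rw [hA, hE]
        fin_cases i <;> fin_cases j <;>
          simp [Matrix.mul_apply, Fin.sum_univ_two, hb, hd]
      have hE0 : E = 0 := by
        calc E = (C * A) * E := by rw [hBA, one_mul]
          _ = C * (A * E) := by rw [mul_assoc]
          _ = 0 := by rw [hAE, mul_zero]
      rw [hE] at hE0
      have h11 := congrFun (congrFun hE0 1) 1
      simp at h11
    · -- r ≠ 0 : columns proportional
      set k : Quaternion ℝ := star s * ((r⁻¹ : ℝ) : Quaternion ℝ) with hk
      have e00 : (r : Quaternion ℝ) * star a + -s * star b = 0 := by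
        have h := congrFun (congrFun hNAh 0) 0
        rw [hN, hA] at h
        simpa [Matrix.mul_apply, Fin.sum_univ_two, conjTranspose_apply] using h
      have e01 : (r : Quaternion ℝ) * star c + -s * star d = 0 := by
        have h := congrFun (congrFun hNAh 0) 1
        rw [hN, hA] at h
        simpa [Matrix.mul_apply, Fin.sum_univ_two, conjTranspose_apply] using h
      have ha : a = b * k := by
        have h2 : (r : Quaternion ℝ) * star a = s * star b := by
          rw [neg_mul, add_neg_eq_zero] at e00
          exact e00
        have h1 : a * (r : Quaternion ℝ) = b * star s := by
          calc a * (r : Quaternion ℝ) = star ((r : Quaternion ℝ) * star a) := by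
                rw [StarMul.star_mul, star_star, Quaternion.star_coe]
            _ = star (s * star b) := by rw [h2]
            _ = b * star s := by rw [StarMul.star_mul, star_star]
        have h3 : a * (r : Quaternion ℝ) * ((r⁻¹ : ℝ) : Quaternion ℝ)
            = b * star s * ((r⁻¹ : ℝ) : Quaternion ℝ) := by rw [h1]
        rwa [mul_assoc a, ← Quaternion.coe_mul, mul_inv_cancel₀ hr0, Quaternion.coe_one,
          mul_one, mul_assoc, ← hk] at h3
      have hc : c = d * k := by
        have h2 : (r : Quaternion ℝ) * star c = s * star d := by
          rw [neg_mul, add_neg_eq_zero] at e01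
          exact e01
        have h1 : c * (r : Quaternion ℝ) = d * star s := by
          calc c * (r : Quaternion ℝ) = star ((r : Quaternion ℝ) * star c) := by
                rw [StarMul.star_mul, star_star, Quaternion.star_coe]
            _ = star (s * star d) := by rw [h2]
            _ = d * star s := by rw [StarMul.star_mul, star_star]
        have h3 : c * (r : Quaternion ℝ) * ((r⁻¹ : ℝ) : Quaternion ℝ)
            = d * star s * ((r⁻¹ : ℝ) : Quaternion ℝ) := by rw [h1]
        rwa [mul_assoc c, ← Quaternion.coe_mul, mul_inv_cancel₀ hr0, Quaternion.coe_one,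
          mul_one, mul_assoc, ← hk] at h3
      set V : Matrix (Fin 2) (Fin 2) (Quaternion ℝ) := !![1, 0; -k, 0] with hV
      have hAV : A * V = 0 := by
        apply Matrix.ext; intro i j
        rw [hA, hV]
        fin_cases i <;> fin_cases j <;>
          simp [Matrix.mul_apply, Fin.sum_univ_two, ha, hc]
      have hV0 : V = 0 := by
        calc V = (C * A) * V := by rw [hBA, one_mul]
          _ = C * (A * V) := by rw [mul_assoc]
          _ = 0 := by rw [hAV, mul_zero]
      rw [hV] at hV0
      have h00 := congrFun (congrFun hV0 0) 0
      simp at h00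
  · -- quartic ≠ 0 → unit
    intro hq
    have hql : p * r - normSq s ≠ 0 := by rw [← hΔl]; exact hq
    have hqr : p' * r' - normSq t ≠ 0 := by rw [← hΔr]; exact hq
    set Δ : ℝ := quartic A with hΔ
    set N : Matrix (Fin 2) (Fin 2) (Quaternion ℝ) :=
      !![(r : Quaternion ℝ), -s; -star s, (p : Quaternion ℝ)] with hN
    set L : Matrix (Fin 2) (Fin 2) (Quaternion ℝ) := Δ⁻¹ • (N * Aᴴ) with hL
    have hLA : L * A = 1 := by
      rw [hL, smul_mul_assoc, mul_assoc, hM, hN, N_mul_M, ← hΔl]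
      apply Matrix.ext; intro i j
      fin_cases i <;> fin_cases j <;>
        simp [Matrix.one_fin_two, Quaternion.smul_coe, inv_mul_cancel₀ hq]
    set N' : Matrix (Fin 2) (Fin 2) (Quaternion ℝ) :=
      !![(r' : Quaternion ℝ), -t; -star t, (p' : Quaternion ℝ)] with hN'
    set R : Matrix (Fin 2) (Fin 2) (Quaternion ℝ) := Δ⁻¹ • (Aᴴ * N') with hR
    have hAR : A * R = 1 := by
      rw [hR, mul_smul_comm, ← mul_assoc, hM', hN', M_mul_N, ← hΔr]
      apply Matrix.ext; intro i j
      fin_cases i <;> fin_cases j <;>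
        simp [Matrix.one_fin_two, Quaternion.smul_coe, inv_mul_cancel₀ hq]
    have hLR : L = R := by
      calc L = L * (A * R) := by rw [hAR, mul_one]
        _ = (L * A) * R := by rw [mul_assoc]
        _ = R := by rw [hLA, one_mul]
    exact ⟨⟨A, R, hAR, hLR ▸ hLA⟩, rfl⟩

end QuarticAux

/-- A `2 × 2` quaternionic matrix is invertible in the matrix ring `M₂(ℍ)` if and only
if its quartic `q` is nonzero: `GL(2,ℍ)` is the complement of the hypersurface `q = 0`. -/
theorem isUnit_iff_quartic_ne_zero (A : Matrix (Fin 2) (Fin 2) (Quaternion ℝ)) :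
    IsUnit A ↔ quartic A ≠ 0 := by
  rw [Matrix.eta_fin_two A]
  exact QuarticAux.main_aux _ _ _ _
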